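/- Let θ, σ, φ, ψ be differentiable real-valued functions on a real interval I satisfying the Einstein–Klein–Gordon evolution system, and define C(t) = σ(t)² + V(φ(t)) + ψ(t)²/2 − θ(t)²/3. If C(t₀) = 0 for some t₀ ∈ I, then C(t) = 0 for all t ∈ I; i.e., the Bianchi I constraint surface is preserved by the evolution. -/

import Mathlib

open Set in
/-- A real-valued function satisfying a linear ODE `f' = L f` with continuous
coefficient on a compact interval, vanishing at one point, vanishes identically. -/
lemma linODE_zero_aux (L f : ℝ → ℝ) (a b c : ℝ) (hc : c ∈ Set.Icc a b)
    (hLcont : ContinuousOn L (Set.Icc a b))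
    (hf : ∀ u ∈ Set.Icc a b, HasDerivAt f (L u * f u) u)
    (h0 : f c = 0) : ∀ u ∈ Set.Icc a b, f u = 0 := by
  obtain ⟨M, hM⟩ := (isCompact_Icc).exists_bound_of_continuousOn hLcont
  have hM0 : 0 ≤ M := le_trans (norm_nonneg _) (hM c hc)
  set μ : ℝ → ℝ := fun u => min (max (L u) (-M)) M with hμ
  have hμeq : ∀ u ∈ Set.Icc a b, μ u = L u := by
    intro u hu
    have := hM u hu
    rw [Real.norm_eq_abs, abs_le] at this
    simp [hμ, max_eq_left this.1, min_eq_left this.2]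
  have hμbd : ∀ u, |μ u| ≤ M := by
    intro u
    rw [abs_le]
    exact ⟨le_min (le_max_right _ _) (by linarith), min_le_right _ _⟩
  set v : ℝ → ℝ → ℝ := fun u y => μ u * y with hv_def
  have hv : ∀ u, LipschitzOnWith M.toNNReal (v u) (univ : Set ℝ) := by
    intro u
    refine LipschitzWith.lipschitzOnWith (LipschitzWith.of_dist_le_mul fun x y => ?_)
    have : dist (v u x) (v u y) = |μ u| * dist x y := by
      simp [hv_def, Real.dist_eq, ← mul_sub, abs_mul]
    rw [this, Real.coe_toNNReal M hM0]
    exact mul_le_mul_of_nonneg_right (hμbd u) dist_nonneg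
  have hfc : ContinuousOn f (Set.Icc a b) :=
    fun u hu => (hf u hu).continuousAt.continuousWithinAt
  have hgc : ContinuousOn (fun _ : ℝ => (0 : ℝ)) (Set.Icc a b) := continuousOn_const
  -- right part: Icc c b
  have hright : ∀ u ∈ Set.Icc c b, f u = 0 := by
    have hsub : Set.Icc c b ⊆ Set.Icc a b := Set.Icc_subset_Icc_left hc.1
    have := ODE_solution_unique_of_mem_Icc_right (v := v) (s := fun _ => univ)
      (K := M.toNNReal) (f := f) (g := fun _ => 0) (a := c) (b := b)
      (fun u _ => hv u)
      (hfc.mono hsub)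
      (fun u hu => by
        have hu' : u ∈ Set.Icc a b := hsub (Set.Ico_subset_Icc_self hu)
        have := (hf u hu').hasDerivWithinAt (s := Set.Ici u)
        rwa [← hμeq u hu'] at this)
      (fun u _ => trivial)
      (hgc.mono hsub)
      (fun u hu => by simpa [hv_def] using (hasDerivWithinAt_const u (Set.Ici u) (0 : ℝ)))
      (fun u _ => trivial)
      (by simpa using h0)
    intro u hu
    simpa using this hu
  -- left part: Icc a c
  have hleft : ∀ u ∈ Set.Icc a c, f u = 0 := by
    have hsub : Set.Icc a c ⊆ Set.Icc a b := Set.Icc_subset_Icc_right hc.2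
    have := ODE_solution_unique_of_mem_Icc_left (v := v) (s := fun _ => univ)
      (K := M.toNNReal) (f := f) (g := fun _ => 0) (a := a) (b := c)
      (fun u _ => hv u)
      (hfc.mono hsub)
      (fun u hu => by
        have hu' : u ∈ Set.Icc a b := hsub (Set.Ioc_subset_Icc_self hu)
        have := (hf u hu').hasDerivWithinAt (s := Set.Iic u)
        rwa [← hμeq u hu'] at this)
      (fun u _ => trivial)
      (hgc.mono hsub)
      (fun u hu => by simpa [hv_def] using (hasDerivWithinAt_const u (Set.Iic u) (0 : ℝ)))
      (fun u _ => trivial)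
      (by simpa using h0)
    intro u hu
    simpa using this hu
  intro u hu
  rcases le_total u c with h | h
  · exact hleft u ⟨hu.1, h⟩
  · exact hright u ⟨h, hu.2⟩

/-- Along solutions of the Einstein–Klein–Gordon evolution
system (units `8πG = 1`) on a real interval `I`, the Bianchi I constraint
surface `C = σ² + V(φ) + ψ²/2 − θ²/3 = 0` is preserved by the evolution:
if `C` vanishes at one time `t₀ ∈ I`, it vanishes on all of `I`. -/
theorem bianchiI_constraint_preserved
    (V : ℝ → ℝ) (hV : Differentiable ℝ V)
    (I : Set ℝ) (hI : I.OrdConnected)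
    (θ σ φ ψ : ℝ → ℝ)
    (hθ : ∀ t ∈ I, DifferentiableAt ℝ θ t) (hσ : ∀ t ∈ I, DifferentiableAt ℝ σ t)
    (hφ : ∀ t ∈ I, DifferentiableAt ℝ φ t) (hψ : ∀ t ∈ I, DifferentiableAt ℝ ψ t)
    (eθ : ∀ t ∈ I, deriv θ t = -(1 / 3) * θ t ^ 2 - 2 * σ t ^ 2 + V (φ t) - ψ t ^ 2)
    (eσ : ∀ t ∈ I, deriv σ t = -θ t ^ 2 / (3 * Real.sqrt 3) - θ t * σ t
        + σ t ^ 2 / Real.sqrt 3 + (1 / Real.sqrt 3) * (V (φ t) + ψ t ^ 2 / 2))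
    (eφ : ∀ t ∈ I, deriv φ t = ψ t)
    (eψ : ∀ t ∈ I, deriv ψ t = -θ t * ψ t - deriv V (φ t))
    (C : ℝ → ℝ)
    (hC : ∀ t, C t = σ t ^ 2 + V (φ t) + ψ t ^ 2 / 2 - θ t ^ 2 / 3)
    (t₀ : ℝ) (ht₀ : t₀ ∈ I) (hC₀ : C t₀ = 0) :
    ∀ t ∈ I, C t = 0 := by
  set L : ℝ → ℝ := fun t => -(2 / 3) * θ t + (2 / Real.sqrt 3) * σ t with hL
  have key : ∀ u ∈ I, HasDerivAt C (L u * C u) u := by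
    intro u hu
    have hσ' : HasDerivAt σ (deriv σ u) u := (hσ u hu).hasDerivAt
    have hθ' : HasDerivAt θ (deriv θ u) u := (hθ u hu).hasDerivAt
    have hφ' : HasDerivAt φ (deriv φ u) u := (hφ u hu).hasDerivAt
    have hψ' : HasDerivAt ψ (deriv ψ u) u := (hψ u hu).hasDerivAt
    have hVφ : HasDerivAt (fun t => V (φ t)) (deriv V (φ u) * deriv φ u) u :=
      (hV (φ u)).hasDerivAt.comp u hφ'
    have hD : HasDerivAt C
        (2 * σ u * deriv σ u + deriv V (φ u) * deriv φ u + ψ u * deriv ψ u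
          - 2 * θ u * deriv θ u / 3) u := by
      have h1 : HasDerivAt (fun t => σ t ^ 2) (2 * σ u * deriv σ u) u := by
        simpa [mul_comm] using hσ'.fun_pow 2
      have h2 : HasDerivAt (fun t => ψ t ^ 2 / 2) (ψ u * deriv ψ u) u := by
        have := (hψ'.fun_pow 2).div_const 2
        refine this.congr_deriv ?_; push_cast; ring
      have h3 : HasDerivAt (fun t => θ t ^ 2 / 3) (2 * θ u * deriv θ u / 3) u := by
        have := (hθ'.fun_pow 2).div_const 3
        refine this.congr_deriv ?_; push_cast; ring
      have h4 := ((h1.fun_add hVφ).fun_add h2).fun_sub h3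
      have h5 : HasDerivAt (fun t => σ t ^ 2 + V (φ t) + ψ t ^ 2 / 2 - θ t ^ 2 / 3)
          (2 * σ u * deriv σ u + deriv V (φ u) * deriv φ u + ψ u * deriv ψ u
            - 2 * θ u * deriv θ u / 3) u := by
        convert h4 using 1
      have hfun : C = fun t => σ t ^ 2 + V (φ t) + ψ t ^ 2 / 2 - θ t ^ 2 / 3 :=
        funext hC
      rw [hfun]
      exact h5
    have heq : 2 * σ u * deriv σ u + deriv V (φ u) * deriv φ u + ψ u * deriv ψ u
          - 2 * θ u * deriv θ u / 3 = L u * C u := by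
      rw [eσ u hu, eθ u hu, eφ u hu, eψ u hu, hC u, hL]
      have hs0 : Real.sqrt 3 ≠ 0 := by positivity
      field_simp
      ring
    rwa [heq] at hD
  have hLc : ∀ u ∈ I, ContinuousAt L u :=
    fun u hu => (((hθ u hu).continuousAt.const_mul _).add
      ((hσ u hu).continuousAt.const_mul _) : )
  intro t ht
  rcases le_total t₀ t with hle | hle
  · have hsub : Set.Icc t₀ t ⊆ I := hI.out ht₀ ht
    exact linODE_zero_aux L C t₀ t t₀ ⟨le_refl _, hle⟩
      (fun u hu => (hLc u (hsub hu)).continuousWithinAt)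
      (fun u hu => key u (hsub hu)) hC₀ t ⟨hle, le_refl _⟩
  · have hsub : Set.Icc t t₀ ⊆ I := hI.out ht ht₀
    exact linODE_zero_aux L C t t₀ t₀ ⟨hle, le_refl _⟩
      (fun u hu => (hLc u (hsub hu)).continuousWithinAt)
      (fun u hu => key u (hsub hu)) hC₀ t ⟨le_refl _, hle⟩
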